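/- For any α < 0, the entrywise power x^α applied to the 3×3 positive semidefinite matrix A with A_{11}=A_{22}=A_{33}=1, A_{12}=A_{21}=A_{23}=A_{32}=1/√2, A_{13}=A_{31}=0 yields a matrix that is not positive semidefinite; moreover A has rank 2. -/

import Mathlib

open Matrix

noncomputable def A4 : Matrix (Fin 3) (Fin 3) ℝ :=
  !![1, 1 / Real.sqrt 2, 0;
     1 / Real.sqrt 2, 1, 1 / Real.sqrt 2;
     0, 1 / Real.sqrt 2, 1]

noncomputable def C4 : Matrix (Fin 2) (Fin 3) ℝ :=
  !![1, 1 / Real.sqrt 2, 0;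
     0, 1 / Real.sqrt 2, 1]

lemma sqrt2_pos : (0:ℝ) < Real.sqrt 2 := Real.sqrt_pos.mpr (by norm_num)

lemma sqrt2_sq : Real.sqrt 2 * Real.sqrt 2 = 2 :=
  Real.mul_self_sqrt (by norm_num)

lemma inv_sqrt2_sq : (1 / Real.sqrt 2) * (1 / Real.sqrt 2) = 1 / 2 := by
  rw [div_mul_div_comm, sqrt2_sq]; norm_num

lemma inv_sqrt2_sq' : (Real.sqrt 2)⁻¹ * (Real.sqrt 2)⁻¹ = 1 / 2 := by
  have := inv_sqrt2_sq
  rw [one_div, one_div] at this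
  linarith

lemma C4T : C4ᵀ = !![1, 0; 1 / Real.sqrt 2, 1 / Real.sqrt 2; 0, 1] := by
  ext i j; fin_cases i <;> fin_cases j <;> rfl

lemma A4_eq : A4 = C4ᵀ * C4 := by
  rw [C4T]
  ext i j
  fin_cases i <;> fin_cases j <;>
    simp [A4, C4, Matrix.mul_apply, Fin.sum_univ_two, inv_sqrt2_sq] <;>
    field_simp <;> nlinarith [sqrt2_sq, sqrt2_pos]

lemma C4H : C4ᵀ = C4ᴴ := (Matrix.conjTranspose_eq_transpose_of_trivial C4).symm

lemma A4_psd : A4.PosSemidef := by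
  rw [A4_eq, C4H]
  exact Matrix.posSemidef_conjTranspose_mul_self C4

lemma CCT : C4 * C4ᴴ = !![3/2, 1/2; 1/2, 3/2] := by
  rw [← C4H, C4T]
  ext i j
  fin_cases i <;> fin_cases j <;>
    simp [C4, Matrix.mul_apply, Fin.sum_univ_three, inv_sqrt2_sq, inv_sqrt2_sq'] <;> norm_num

lemma A4_rank : A4.rank = 2 := by
  rw [A4_eq, C4H, Matrix.rank_conjTranspose_mul_self]
  refine le_antisymm (le_trans (Matrix.rank_le_card_height C4) (by simp)) ?_
  have h2 : (C4 * C4ᴴ).rank ≤ C4.rank := Matrix.rank_mul_le_left _ _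
  have h3 : (C4 * C4ᴴ).rank = 2 := by
    rw [Matrix.rank_of_isUnit]
    · simp
    · rw [Matrix.isUnit_iff_isUnit_det]
      apply isUnit_iff_ne_zero.mpr
      rw [CCT, Matrix.det_fin_two_of]
      norm_num
  omega

theorem stmt4 (α : ℝ) (hα : α < 0) :
    A4.PosSemidef ∧ ¬ (A4.map fun x => x ^ α).PosSemidef ∧ A4.rank = 2 := by
  refine ⟨A4_psd, ?_, A4_rank⟩
  intro hpsd
  have hb : 1 < (1 / Real.sqrt 2) ^ α := by
    rw [Real.one_lt_rpow_iff_of_pos (by positivity)]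
    right
    exact ⟨by rw [div_lt_one sqrt2_pos]; nlinarith [sqrt2_sq, sqrt2_pos], hα⟩
  have := hpsd.dotProduct_mulVec_nonneg ![(1:ℝ), -1, 1]
  set b := (1 / Real.sqrt 2) ^ α with hbdef
  have hq : dotProduct (star ![1, -1, 1]) ((A4.map fun x => x ^ α) *ᵥ ![(1:ℝ), -1, 1])
      = 3 - 4 * b := by
    simp [A4, Matrix.mulVec, dotProduct, Fin.sum_univ_three, Matrix.map,
      Real.zero_rpow (ne_of_lt hα), Real.one_rpow, hbdef, one_div]
    ring
  rw [hq] at this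
  linarith
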